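/- arXiv:math/0501418 — 3 statements merged into one kernel-verified Lean document; each statement's English description precedes it below -/
import Mathlib

section
/- Let A, A', B, B' be lattices with least elements and let f : A → A' and g : B → B' be lattice homomorphisms preserving the least element. Then the map h defined by h(X) = ⋃{ f(x) ⊠ g(y) : ⟨x,y⟩ ∈ X } sends every element of A ⊠ B to an element of A' ⊠ B', satisfies h(a ⊠ b) = f(a) ⊠ g(b) for all ⟨a,b⟩ ∈ A × B, and is a {∨,0}-homomorphism from A ⊠ B to A' ⊠ B'. Moreover, if f and g are both lattice embeddings (injective), then h is a lattice embedding of A ⊠ B into A' ⊠ B'. -/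
set_option linter.unusedSectionVars false
set_option linter.unusedVariables false
set_option linter.unnecessarySeqFocus false



/-- The pure box `a □ b = {⟨x,y⟩ : x ≤ a or y ≤ b}`. -/
def pureBox {A B : Type*} [Lattice A] [Lattice B] (a : A) (b : B) : Set (A × B) :=
  {p : A × B | p.1 ≤ a ∨ p.2 ≤ b}

/-- `a ∘ b = {⟨x,y⟩ : x ≤ a and y ≤ b}`. -/
def pureCirc {A B : Type*} [Lattice A] [Lattice B] (a : A) (b : B) : Set (A × B) :=
  {p : A × B | p.1 ≤ a ∧ p.2 ≤ b}

/-- The box product `A □ B`: all finite (nonempty) intersections of pure boxes. -/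
def BoxProd (A B : Type*) [Lattice A] [Lattice B] : Set (Set (A × B)) :=
  {H | ∃ (n : ℕ) (a : Fin (n + 1) → A) (b : Fin (n + 1) → B),
    H = ⋂ i, pureBox (a i) (b i)}

/-- `A ⊡ B`: all finite unions of pure boxes (at least one) and pure circles. -/
def BoxDot (A B : Type*) [Lattice A] [Lattice B] : Set (Set (A × B)) :=
  {H | ∃ (m n : ℕ) (a : Fin (m + 1) → A) (b : Fin (m + 1) → B)
      (c : Fin n → A) (d : Fin n → B),
    H = (⋃ i, pureBox (a i) (b i)) ∪ ⋃ j, pureCirc (c j) (d j)}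

/-- The box closure of a subset of `A × B`: intersection of all pure boxes containing it. -/
def BoxCl {A B : Type*} [Lattice A] [Lattice B] (X : Set (A × B)) : Set (A × B) :=
  ⋂ (a : A) (b : B) (_ : X ⊆ pureBox a b), pureBox a b

/-- The pure lattice tensor `a ⊠ b = (a ∘ b) ∪ ⊥_{A,B}`, where `⊥_{A,B}` consists of
the pairs one of whose coordinates is a least element. -/
def pureTens {A B : Type*} [Lattice A] [Lattice B] (a : A) (b : B) : Set (A × B) :=
  pureCirc a b ∪ {p : A × B | IsBot p.1 ∨ IsBot p.2}

/-- A subset of `A × B` is confined if it is contained in some pure lattice tensor. -/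
def Confined {A B : Type*} [Lattice A] [Lattice B] (X : Set (A × B)) : Prop :=
  ∃ (a : A) (b : B), X ⊆ pureTens a b

/-- The lattice tensor product `A ⊠ B`: all confined elements of `A □ B`. -/
def LatTens (A B : Type*) [Lattice A] [Lattice B] : Set (Set (A × B)) :=
  {H | H ∈ BoxProd A B ∧ Confined H}

/-- `X^△ = {⟨a,b⟩ : ⟨x,y⟩ ◁ ⟨a,b⟩ for all ⟨x,y⟩ ∈ X}` where `⟨x,y⟩ ◁ ⟨a,b⟩` iff
`x ≤ a` or `y ≤ b`. -/
def trUp {A B : Type*} [Lattice A] [Lattice B] (X : Set (A × B)) : Set (A × B) :=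
  {p : A × B | ∀ q ∈ X, q.1 ≤ p.1 ∨ q.2 ≤ p.2}

/-- `X^▽ = {⟨a,b⟩ : ⟨a,b⟩ ◁ ⟨x,y⟩ for all ⟨x,y⟩ ∈ X}`. -/
def trDown {A B : Type*} [Lattice A] [Lattice B] (X : Set (A × B)) : Set (A × B) :=
  {p : A × B | ∀ q ∈ X, p.1 ≤ q.1 ∨ p.2 ≤ q.2}

namespace S16

section folds
variable {α β : Type*} [Lattice α] [Lattice β] {ι : Type*}

def mfold (base : α) (F : ι → α) (S : ι → Bool) : List ι → α
  | [] => base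
  | i :: l => if S i then F i ⊓ mfold base F S l else mfold base F S l

def sfold (base : α) (F : ι → α) (S : ι → Bool) : List ι → α
  | [] => base
  | i :: l => if S i then F i ⊔ sfold base F S l else sfold base F S l

lemma le_mfold {base : α} {F : ι → α} {S : ι → Bool} {x : α} {l : List ι} :
    x ≤ mfold base F S l ↔ x ≤ base ∧ ∀ i ∈ l, S i = true → x ≤ F i := by
  induction l with
  | nil => simp [mfold]
  | cons i l ih =>
    by_cases h : S i <;> simp [mfold, h, ih, le_inf_iff] <;> tauto

lemma mfold_le_base {base : α} {F : ι → α} {S : ι → Bool} {l : List ι} :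
    mfold base F S l ≤ base := by
  induction l with
  | nil => simp [mfold]
  | cons i l ih =>
    by_cases h : S i
    · simpa [mfold, h] using le_trans inf_le_right ih
    · simpa [mfold, h] using ih

lemma sfold_le {base : α} {F : ι → α} {S : ι → Bool} {x : α} {l : List ι} :
    sfold base F S l ≤ x ↔ base ≤ x ∧ ∀ i ∈ l, S i = true → F i ≤ x := by
  induction l with
  | nil => simp [sfold]
  | cons i l ih =>
    by_cases h : S i <;> simp [sfold, h, ih, sup_le_iff] <;> tauto

lemma sfold_all_false {base : α} {F : ι → α} {S : ι → Bool} {l : List ι}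
    (h : ∀ i ∈ l, S i = false) : sfold base F S l = base := by
  induction l with
  | nil => rfl
  | cons i l ih =>
    have := h i (by simp)
    simp [sfold, this]
    exact ih fun j hj => h j (by simp [hj])

lemma map_mfold (f : LatticeHom α β) (base : α) (F : ι → α) (S : ι → Bool) (l : List ι) :
    f (mfold base F S l) = mfold (f base) (fun i => f (F i)) S l := by
  induction l with
  | nil => rfl
  | cons i l ih => by_cases h : S i <;> simp [mfold, h, map_inf, ih]

lemma map_sfold (f : LatticeHom α β) (base : α) (F : ι → α) (S : ι → Bool) (l : List ι) :
    f (sfold base F S l) = sfold (f base) (fun i => f (F i)) S l := by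
  induction l with
  | nil => rfl
  | cons i l ih => by_cases h : S i <;> simp [sfold, h, map_sup, ih]

end folds
end S16

namespace S16
section sets
variable {A B : Type*} [Lattice A] [Lattice B]

def bs (A B : Type*) [Lattice A] [Lattice B] : Set (A × B) :=
  {p : A × B | IsBot p.1 ∨ IsBot p.2}

lemma tens_def (a : A) (b : B) : pureTens a b = pureCirc a b ∪ bs A B := rfl

lemma bs_subset_box (a : A) (b : B) : bs A B ⊆ pureBox a b := by
  rintro p (h | h)
  · exact Or.inl (h a)
  · exact Or.inr (h b)

lemma bs_subset_tens (a : A) (b : B) : bs A B ⊆ pureTens a b := Set.subset_union_right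

lemma box_mono {a a' : A} {b b' : B} (ha : a ≤ a') (hb : b ≤ b') :
    pureBox a b ⊆ pureBox a' b' := by
  rintro p (h | h)
  · exact Or.inl (h.trans ha)
  · exact Or.inr (h.trans hb)

lemma circ_mono {a a' : A} {b b' : B} (ha : a ≤ a') (hb : b ≤ b') :
    pureCirc a b ⊆ pureCirc a' b' := fun p hp => ⟨hp.1.trans ha, hp.2.trans hb⟩

lemma tens_mono {a a' : A} {b b' : B} (ha : a ≤ a') (hb : b ≤ b') :
    pureTens a b ⊆ pureTens a' b' :=
  Set.union_subset_union_left _ (circ_mono ha hb)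

lemma mem_circ_self (a : A) (b : B) : (a, b) ∈ pureCirc a b := ⟨le_rfl, le_rfl⟩

lemma circ_subset_tens (a : A) (b : B) : pureCirc a b ⊆ pureTens a b := Set.subset_union_left

lemma circ_subset_box_iff {c a : A} {d b : B} :
    pureCirc c d ⊆ pureBox a b ↔ c ≤ a ∨ d ≤ b := by
  constructor
  · intro h; exact h (mem_circ_self c d)
  · rintro (h | h) p hp
    · exact Or.inl (hp.1.trans h)
    · exact Or.inr (hp.2.trans h)

lemma boxCl_subset_box {X : Set (A × B)} {a : A} {b : B} (h : X ⊆ pureBox a b) :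
    BoxCl X ⊆ pureBox a b := fun p hp => by
  simp only [BoxCl, Set.mem_iInter] at hp; exact hp a b h

lemma subset_boxCl (X : Set (A × B)) : X ⊆ BoxCl X := by
  intro p hp; simp only [BoxCl, Set.mem_iInter]; intro a b h; exact h hp

variable [OrderBot A] [OrderBot B]

lemma tens_eq_boxes (a : A) (b : B) :
    pureTens a b = pureBox a ⊥ ∩ pureBox ⊥ b := by
  ext p
  simp only [pureTens, pureCirc, pureBox, bs, Set.mem_union, Set.mem_setOf_eq,
    Set.mem_inter_iff, isBot_iff_eq_bot, le_bot_iff]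
  constructor
  · rintro (⟨h1, h2⟩ | h | h)
    · exact ⟨Or.inl h1, Or.inr h2⟩
    · exact ⟨Or.inl (h ▸ bot_le), Or.inl h⟩
    · exact ⟨Or.inr h, Or.inr (h ▸ bot_le)⟩
  · rintro ⟨h1 | h1, h2 | h2⟩
    · exact Or.inr (Or.inl h2)
    · exact Or.inl ⟨h1, h2⟩
    · exact Or.inr (Or.inr h1)
    · exact Or.inr (Or.inr h1)

end sets
end S16

namespace S16
section core
variable {A A' B B' : Type*}
  [Lattice A] [OrderBot A] [Lattice A'] [OrderBot A']
  [Lattice B] [OrderBot B] [Lattice B'] [OrderBot B']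

/-- Lemma B: decomposition of a confined finite intersection of boxes into circles. -/
lemma boxes_circ_decomp {ι : Type*} (l : List ι) (Aa : ι → A) (Bb : ι → B) (a : A) (b : B) :
    ((⋂ i ∈ l, pureBox (Aa i) (Bb i)) ∩ pureBox a ⊥ ∩ pureBox ⊥ b)
      = (⋃ S : ι → Bool,
          pureCirc (mfold a Aa S l) (mfold b Bb (fun i => !(S i)) l)) ∪ bs A B := by
  apply Set.Subset.antisymm
  · rintro p ⟨⟨hboxes, hA⟩, hB⟩
    simp only [Set.mem_iInter] at hboxes
    by_cases hbot : IsBot p.1 ∨ IsBot p.2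
    · exact Or.inr hbot
    push_neg at hbot
    have hp1 : p.1 ≤ a := by
      rcases hA with h | h
      · exact h
      · exact absurd (isBot_iff_eq_bot.mpr (le_bot_iff.mp h)) hbot.2
    have hp2 : p.2 ≤ b := by
      rcases hB with h | h
      · exact absurd (isBot_iff_eq_bot.mpr (le_bot_iff.mp h)) hbot.1
      · exact h
    classical
    refine Or.inl (Set.mem_iUnion.mpr ⟨fun i => decide (p.1 ≤ Aa i), ?_, ?_⟩)
    · exact le_mfold.mpr ⟨hp1, fun i _ hi => of_decide_eq_true hi⟩
    · refine le_mfold.mpr ⟨hp2, fun i hi hdi => ?_⟩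
      have : ¬ p.1 ≤ Aa i := by
        simpa using hdi
      rcases hboxes i hi with h | h
      · exact absurd h this
      · exact h
  · rintro p (hp | hp)
    · simp only [Set.mem_iUnion] at hp
      obtain ⟨S, h1, h2⟩ := hp
      refine ⟨⟨Set.mem_iInter.mpr fun i => Set.mem_iInter.mpr fun hi => ?_, ?_⟩, ?_⟩
      · by_cases hSi : S i = true
        · exact Or.inl (h1.trans ((le_mfold.mp le_rfl).2 i hi hSi))
        · refine Or.inr (h2.trans ((le_mfold.mp le_rfl).2 i hi ?_))
          simp [hSi]
      · exact Or.inl (h1.trans mfold_le_base)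
      · exact Or.inr (h2.trans mfold_le_base)
    · exact ⟨⟨Set.mem_iInter.mpr fun i => Set.mem_iInter.mpr fun _ => bs_subset_box _ _ hp,
        bs_subset_box _ _ hp⟩, bs_subset_box _ _ hp⟩

variable (f : LatticeHom A A') (g : LatticeHom B B')

/-- The image map. -/
def himg (X : Set (A × B)) : Set (A' × B') := ⋃ p ∈ X, pureTens (f p.1) (g p.2)

variable (hf0 : f ⊥ = ⊥) (hg0 : g ⊥ = ⊥)
include hf0 hg0

lemma tens_subset_bs {x : A} {y : B} (h : IsBot x ∨ IsBot y) :
    pureTens (f x) (g y) ⊆ bs A' B' := by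
  rintro q (hq | hq)
  · rcases h with h | h
    · left
      rw [isBot_iff_eq_bot] at h
      rw [isBot_iff_eq_bot, le_bot_iff.mp (hq.1.trans_eq (by rw [h, hf0]))]
    · right
      rw [isBot_iff_eq_bot] at h
      rw [isBot_iff_eq_bot, le_bot_iff.mp (hq.2.trans_eq (by rw [h, hg0]))]
  · exact hq

/-- Lemma C: image of a union of circles plus the bottom set. -/
lemma himg_circUnion {σ : Type*} (c : σ → A) (d : σ → B) :
    himg f g ((⋃ S, pureCirc (c S) (d S)) ∪ bs A B)
      = (⋃ S, pureCirc (f (c S)) (g (d S))) ∪ bs A' B' := by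
  apply Set.Subset.antisymm
  · refine Set.iUnion₂_subset fun p hp => ?_
    rcases hp with hp | hp
    · simp only [Set.mem_iUnion] at hp
      obtain ⟨S, hS⟩ := hp
      refine (tens_mono (OrderHomClass.mono f hS.1) (OrderHomClass.mono g hS.2)).trans ?_
      rw [tens_def]
      exact Set.union_subset_union_left _ (Set.subset_iUnion_of_subset S le_rfl)
    · exact (tens_subset_bs f g hf0 hg0 hp).trans Set.subset_union_right
  · apply Set.union_subset
    · refine Set.iUnion_subset fun S => ?_
      refine Set.subset_iUnion₂_of_subset (c S, d S) ?_ (circ_subset_tens _ _)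
      exact Or.inl (Set.mem_iUnion.mpr ⟨S, mem_circ_self _ _⟩)
    · refine Set.subset_iUnion₂_of_subset (⊥, ⊥) ?_ ?_
      · exact Or.inr (Or.inl (isBot_iff_eq_bot.mpr rfl))
      · exact (bs_subset_tens _ _)

/-- Main Lemma: image of a confined finite intersection of boxes. -/
lemma himg_boxes {ι : Type*} (l : List ι) (Aa : ι → A) (Bb : ι → B) (a : A) (b : B)
    (X : Set (A × B)) (hX : X = ⋂ i ∈ l, pureBox (Aa i) (Bb i))
    (hconf : X ⊆ pureTens a b) :
    himg f g X = (⋂ i ∈ l, pureBox (f (Aa i)) (g (Bb i)))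
      ∩ pureBox (f a) ⊥ ∩ pureBox ⊥ (g b) := by
  have hX' : X = (⋂ i ∈ l, pureBox (Aa i) (Bb i)) ∩ pureBox a ⊥ ∩ pureBox ⊥ b := by
    rw [tens_eq_boxes] at hconf
    rw [← hX]
    rw [Set.inter_assoc]
    exact (Set.inter_eq_left.mpr hconf).symm
  rw [hX', boxes_circ_decomp, himg_circUnion f g hf0 hg0]
  have e1 : ∀ S : ι → Bool, f (mfold a Aa S l) = mfold (f a) (fun i => f (Aa i)) S l :=
    fun S => map_mfold f a Aa S l
  have e2 : ∀ S : ι → Bool, g (mfold b Bb (fun i => !(S i)) l)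
      = mfold (g b) (fun i => g (Bb i)) (fun i => !(S i)) l :=
    fun S => map_mfold g b Bb (fun i => !(S i)) l
  rw [boxes_circ_decomp l (fun i => f (Aa i)) (fun i => g (Bb i)) (f a) (g b)]
  congr 1
  exact Set.iUnion_congr fun S => by rw [e1 S, e2 S]

end core
end S16


namespace S16
section cl
variable {A B : Type*} [Lattice A] [OrderBot A] [Lattice B] [OrderBot B]

/-- Closure of a finite union of circles plus bottoms. -/
lemma boxCl_circUnion {τ : Type*} (lt : List τ) (hlt : ∀ t, t ∈ lt)
    (x : τ → A) (y : τ → B) :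
    BoxCl ((⋃ t, pureCirc (x t) (y t)) ∪ bs A B)
      = ⋂ T : τ → Bool, pureBox (sfold ⊥ x T lt) (sfold ⊥ y (fun t => !(T t)) lt) := by
  have hsub : ∀ (u : A) (v : B),
      ((⋃ t, pureCirc (x t) (y t)) ∪ bs A B) ⊆ pureBox u v ↔
        ∀ t, x t ≤ u ∨ y t ≤ v := by
    intro u v
    constructor
    · intro h t
      exact circ_subset_box_iff.mp ((Set.subset_iUnion _ t).trans
        (Set.subset_union_left.trans h))
    · intro h
      apply Set.union_subset
      · exact Set.iUnion_subset fun t => circ_subset_box_iff.mpr (h t)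
      · exact bs_subset_box u v
  apply Set.Subset.antisymm
  · refine Set.subset_iInter fun T => ?_
    apply boxCl_subset_box
    rw [hsub]
    intro t
    by_cases hT : T t = true
    · exact Or.inl ((sfold_le.mp le_rfl).2 t (hlt t) hT)
    · refine Or.inr ((sfold_le.mp le_rfl).2 t (hlt t) ?_)
      simp [hT]
  · intro p hp
    simp only [Set.mem_iInter] at hp
    simp only [BoxCl, Set.mem_iInter]
    intro u v huv
    rw [hsub] at huv
    classical
    have hu : sfold ⊥ x (fun t => decide (x t ≤ u)) lt ≤ u :=
      sfold_le.mpr ⟨bot_le, fun t _ ht => of_decide_eq_true ht⟩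
    have hv : sfold ⊥ y (fun t => !(decide (x t ≤ u))) lt ≤ v := by
      refine sfold_le.mpr ⟨bot_le, fun t _ ht => ?_⟩
      rcases huv t with h | h
      · simp [h] at ht
      · exact h
    exact box_mono hu hv (hp (fun t => decide (x t ≤ u)))

end cl

section bp
variable {A B : Type*} [Lattice A] [Lattice B]

lemma listInter_finRange {n : ℕ} (s : Fin n → Set (A × B)) :
    (⋂ i ∈ List.finRange n, s i) = ⋂ i, s i := by
  ext p; simp [List.mem_finRange]

lemma boxProd_inter_box {H : Set (A × B)} (hH : H ∈ BoxProd A B) (c : A) (d : B) :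
    H ∩ pureBox c d ∈ BoxProd A B := by
  obtain ⟨n, a, b, rfl⟩ := hH
  refine ⟨n + 1, Fin.cons c a, Fin.cons d b, ?_⟩
  ext p
  simp only [Set.mem_inter_iff, Set.mem_iInter, Fin.forall_fin_succ, Fin.cons_zero,
    Fin.cons_succ, Fin.cons_zero]
  tauto

end bp
end S16

namespace S16
section inj
variable {A A' : Type*} [Lattice A] [Lattice A'] (f : LatticeHom A A')

lemma map_le_iff (hf : Function.Injective f) {x y : A} : f x ≤ f y ↔ x ≤ y := by
  constructor
  · intro h
    have h2 : f (x ⊓ y) = f x := by rw [map_inf, inf_eq_left.mpr h]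
    exact inf_eq_left.mp (hf h2)
  · exact fun h => OrderHomClass.mono f h

end inj

section assemble
variable {A A' B B' : Type*}
  [Lattice A] [OrderBot A] [Lattice A'] [OrderBot A']
  [Lattice B] [OrderBot B] [Lattice B'] [OrderBot B']
  (f : LatticeHom A A') (g : LatticeHom B B')

lemma latTens_rep {X : Set (A × B)} (hX : X ∈ LatTens A B) :
    ∃ (n : ℕ) (a_ : Fin (n + 1) → A) (b_ : Fin (n + 1) → B) (a : A) (b : B),
      (X = ⋂ i ∈ List.finRange (n + 1), pureBox (a_ i) (b_ i)) ∧ X ⊆ pureTens a b := by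
  obtain ⟨⟨n, a_, b_, hrep⟩, ⟨a, b, hconf⟩⟩ := hX
  exact ⟨n, a_, b_, a, b, by rw [hrep, listInter_finRange], hconf⟩

variable (hf0 : f ⊥ = ⊥) (hg0 : g ⊥ = ⊥)
include hf0 hg0

lemma himg_mem {X : Set (A × B)} (hX : X ∈ LatTens A B) :
    himg f g X ∈ LatTens A' B' := by
  obtain ⟨n, a_, b_, a, b, hrep, hconf⟩ := latTens_rep hX
  rw [himg_boxes f g hf0 hg0 _ a_ b_ a b X hrep hconf]
  constructor
  · apply boxProd_inter_box
    apply boxProd_inter_box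
    refine ⟨n, fun i => f (a_ i), fun i => g (b_ i), ?_⟩
    ext p
    simp [List.mem_finRange]
  · refine ⟨f a, g b, ?_⟩
    rw [tens_eq_boxes]
    intro p hp
    exact ⟨hp.1.2, hp.2⟩

lemma mem_himg_iff (hfI : Function.Injective f) (hgI : Function.Injective g)
    {X : Set (A × B)} (hX : X ∈ LatTens A B) (p : A × B) :
    p ∈ X ↔ (f p.1, g p.2) ∈ himg f g X := by
  obtain ⟨n, a_, b_, a, b, hrep, hconf⟩ := latTens_rep hX
  have hX' : X = (⋂ i ∈ List.finRange (n+1), pureBox (a_ i) (b_ i))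
      ∩ pureBox a ⊥ ∩ pureBox ⊥ b := by
    rw [tens_eq_boxes] at hconf
    rw [← hrep, Set.inter_assoc]
    exact (Set.inter_eq_left.mpr hconf).symm
  rw [himg_boxes f g hf0 hg0 _ a_ b_ a b X hrep hconf]
  rw [hX']
  have hbox : ∀ (u : A) (v : B),
      ((f p.1, g p.2) ∈ pureBox (f u) (g v)) ↔ p ∈ pureBox u v := by
    intro u v
    simp only [pureBox, Set.mem_setOf_eq]
    rw [map_le_iff f hfI, map_le_iff g hgI]
  simp only [Set.mem_inter_iff, Set.mem_iInter]
  rw [show (⊥ : B') = g ⊥ from hg0.symm, show (⊥ : A') = f ⊥ from hf0.symm]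
  simp only [hbox]

end assemble
end S16

namespace S16
section more
variable {A A' B B' : Type*}
  [Lattice A] [OrderBot A] [Lattice A'] [OrderBot A']
  [Lattice B] [OrderBot B] [Lattice B'] [OrderBot B']
  (f : LatticeHom A A') (g : LatticeHom B B')

lemma tens_inter (a a' : A) (b b' : B) :
    pureTens a b ∩ pureTens a' b' ⊆ pureTens (a ⊓ a') (b ⊓ b') := by
  rintro p ⟨h | h, h' | h'⟩
  · exact Or.inl ⟨le_inf h.1 h'.1, le_inf h.2 h'.2⟩
  · exact Or.inr h'
  · exact Or.inr h
  · exact Or.inr h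

lemma union_circ_sum {σ₁ σ₂ : Type*} (c1 : σ₁ → A) (d1 : σ₁ → B) (c2 : σ₂ → A) (d2 : σ₂ → B) :
    ((⋃ S, pureCirc (c1 S) (d1 S)) ∪ bs A B) ∪ ((⋃ S, pureCirc (c2 S) (d2 S)) ∪ bs A B)
      = (⋃ t : σ₁ ⊕ σ₂, pureCirc (Sum.elim c1 c2 t) (Sum.elim d1 d2 t)) ∪ bs A B := by
  ext p
  simp only [Set.mem_union, Set.mem_iUnion, Sum.exists, Sum.elim_inl, Sum.elim_inr]
  tauto

lemma himg_mono {X Y : Set (A × B)} (h : X ⊆ Y) : himg f g X ⊆ himg f g Y :=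
  Set.biUnion_subset_biUnion_left h

variable (hf0 : f ⊥ = ⊥) (hg0 : g ⊥ = ⊥)
include hf0 hg0

lemma himg_tens (a : A) (b : B) :
    himg f g (pureTens a b) = pureTens (f a) (g b) := by
  apply Set.Subset.antisymm
  · refine Set.iUnion₂_subset fun p hp => ?_
    rcases hp with hp | hp
    · exact tens_mono (OrderHomClass.mono f hp.1) (OrderHomClass.mono g hp.2)
    · exact (tens_subset_bs f g hf0 hg0 hp).trans (bs_subset_tens _ _)
  · exact Set.subset_iUnion₂_of_subset (a, b) (circ_subset_tens a b (mem_circ_self a b))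
      le_rfl

lemma himg_boxCl_union {H K : Set (A × B)} (hH : H ∈ LatTens A B) (hK : K ∈ LatTens A B) :
    himg f g (BoxCl (H ∪ K)) = BoxCl (himg f g H ∪ himg f g K) := by
  classical
  obtain ⟨n₁, a1, b1, A1, B1, hrep1, hc1⟩ := latTens_rep hH
  obtain ⟨n₂, a2, b2, A2, B2, hrep2, hc2⟩ := latTens_rep hK
  set l₁ := List.finRange (n₁ + 1) with hl₁
  set l₂ := List.finRange (n₂ + 1) with hl₂
  -- circle decompositions of H and K
  have hH3 : H = (⋂ i ∈ l₁, pureBox (a1 i) (b1 i)) ∩ pureBox A1 ⊥ ∩ pureBox ⊥ B1 := by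
    rw [tens_eq_boxes] at hc1
    rw [← hrep1, Set.inter_assoc]
    exact (Set.inter_eq_left.mpr hc1).symm
  have hK3 : K = (⋂ i ∈ l₂, pureBox (a2 i) (b2 i)) ∩ pureBox A2 ⊥ ∩ pureBox ⊥ B2 := by
    rw [tens_eq_boxes] at hc2
    rw [← hrep2, Set.inter_assoc]
    exact (Set.inter_eq_left.mpr hc2).symm
  set cH : (Fin (n₁ + 1) → Bool) → A := fun S => mfold A1 a1 S l₁ with hcH
  set dH : (Fin (n₁ + 1) → Bool) → B := fun S => mfold B1 b1 (fun i => !(S i)) l₁ with hdH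
  set cK : (Fin (n₂ + 1) → Bool) → A := fun S => mfold A2 a2 S l₂ with hcK
  set dK : (Fin (n₂ + 1) → Bool) → B := fun S => mfold B2 b2 (fun i => !(S i)) l₂ with hdK
  have hHcirc : H = (⋃ S, pureCirc (cH S) (dH S)) ∪ bs A B := by
    rw [hH3, boxes_circ_decomp]
  have hKcirc : K = (⋃ S, pureCirc (cK S) (dK S)) ∪ bs A B := by
    rw [hK3, boxes_circ_decomp]
  set τ := (Fin (n₁ + 1) → Bool) ⊕ (Fin (n₂ + 1) → Bool) with hτ
  set x : τ → A := Sum.elim cH cK with hx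
  set y : τ → B := Sum.elim dH dK with hy
  have hUK : H ∪ K = (⋃ t, pureCirc (x t) (y t)) ∪ bs A B := by
    rw [hHcirc, hKcirc, union_circ_sum]
  set lt : List τ := (Finset.univ : Finset τ).toList with hlt'
  have hlt : ∀ t, t ∈ lt := fun t => by simp [hlt', Finset.mem_toList]
  set u : (τ → Bool) → A := fun T => sfold ⊥ x T lt with hu
  set v : (τ → Bool) → B := fun T => sfold ⊥ y (fun t => !(T t)) lt with hv
  have hJ : BoxCl (H ∪ K) = ⋂ T : τ → Bool, pureBox (u T) (v T) := by
    rw [hUK, boxCl_circUnion lt hlt x y]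
  set lT : List (τ → Bool) := (Finset.univ : Finset (τ → Bool)).toList with hlT'
  have hlT : ∀ T, T ∈ lT := fun T => by simp [hlT', Finset.mem_toList]
  have hJlist : BoxCl (H ∪ K) = ⋂ T ∈ lT, pureBox (u T) (v T) := by
    rw [hJ]; ext p; simp [hlT]
  -- bounds on the peaks
  have hxb : ∀ t ∈ lt, x t ≤ A1 ⊔ A2 := by
    rintro (S | S) _
    · exact le_trans mfold_le_base le_sup_left
    · exact le_trans mfold_le_base le_sup_right
  have hyb : ∀ t ∈ lt, y t ≤ B1 ⊔ B2 := by
    rintro (S | S) _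
    · exact le_trans mfold_le_base le_sup_left
    · exact le_trans mfold_le_base le_sup_right
  have hJconf : BoxCl (H ∪ K) ⊆ pureTens (A1 ⊔ A2) (B1 ⊔ B2) := by
    have hUKsub : H ∪ K ⊆ pureTens (A1 ⊔ A2) (B1 ⊔ B2) :=
      Set.union_subset (hc1.trans (tens_mono le_sup_left le_sup_left))
        (hc2.trans (tens_mono le_sup_right le_sup_right))
    rw [tens_eq_boxes] at hUKsub ⊢
    exact Set.subset_inter
      (boxCl_subset_box (hUKsub.trans Set.inter_subset_left))
      (boxCl_subset_box (hUKsub.trans Set.inter_subset_right))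
  -- LHS
  have hLHS : himg f g (BoxCl (H ∪ K)) =
      (⋂ T ∈ lT, pureBox (f (u T)) (g (v T)))
        ∩ pureBox (f (A1 ⊔ A2)) ⊥ ∩ pureBox ⊥ (g (B1 ⊔ B2)) :=
    himg_boxes f g hf0 hg0 lT u v (A1 ⊔ A2) (B1 ⊔ B2) _ hJlist hJconf
  -- RHS
  have hImgU : himg f g H ∪ himg f g K =
      (⋃ t, pureCirc (f (x t)) (g (y t))) ∪ bs A' B' := by
    rw [hHcirc, hKcirc, himg_circUnion f g hf0 hg0, himg_circUnion f g hf0 hg0]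
    have := union_circ_sum (fun S => f (cH S)) (fun S => g (dH S))
      (fun S => f (cK S)) (fun S => g (dK S))
    rw [this]
    congr 1
    apply Set.iUnion_congr
    rintro (S | S) <;> rfl
  have hmapx : ∀ T, f (u T) = sfold ⊥ (fun t => f (x t)) T lt := by
    intro T; rw [hu]; simp only []; rw [map_sfold, hf0]
  have hmapy : ∀ T, g (v T) = sfold ⊥ (fun t => g (y t)) (fun t => !(T t)) lt := by
    intro T; rw [hv]; simp only []; rw [map_sfold, hg0]
  have hRHS : BoxCl (himg f g H ∪ himg f g K)
      = ⋂ T : τ → Bool, pureBox (f (u T)) (g (v T)) := by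
    rw [hImgU, boxCl_circUnion lt hlt (fun t => f (x t)) (fun t => g (y t))]
    exact Set.iInter_congr fun T => by rw [hmapx T, hmapy T]
  rw [hLHS, hRHS]
  -- final comparison
  apply Set.Subset.antisymm
  · intro p hp
    refine Set.mem_iInter.mpr fun T => ?_
    exact Set.mem_iInter₂.mp hp.1.1 T (hlT T)
  · intro p hp
    have hp' := Set.mem_iInter.mp hp
    refine ⟨⟨Set.mem_iInter₂.mpr fun T _ => hp' T, ?_⟩, ?_⟩
    · -- pureBox (f (A1 ⊔ A2)) ⊥ ; use T ≡ true
      have h1 : v (fun _ => true) = ⊥ := sfold_all_false fun t _ => rfl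
      have h2 : u (fun _ => true) ≤ A1 ⊔ A2 := sfold_le.mpr ⟨bot_le, fun t ht _ => hxb t ht⟩
      have := hp' (fun _ => true)
      rw [h1, hg0] at this
      exact box_mono (OrderHomClass.mono f h2) le_rfl this
    · -- pureBox ⊥ (g (B1 ⊔ B2)) ; use T ≡ false
      have h1 : u (fun _ => false) = ⊥ := sfold_all_false fun t _ => rfl
      have h2 : v (fun _ => false) ≤ B1 ⊔ B2 := sfold_le.mpr ⟨bot_le, fun t ht _ => hyb t ht⟩
      have := hp' (fun _ => false)
      rw [h1, hf0] at this
      exact box_mono le_rfl (OrderHomClass.mono g h2) this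

end more
end S16

namespace S16
section interpart
variable {A A' B B' : Type*}
  [Lattice A] [OrderBot A] [Lattice A'] [OrderBot A']
  [Lattice B] [OrderBot B] [Lattice B'] [OrderBot B']
  (f : LatticeHom A A') (g : LatticeHom B B')
  (hf0 : f ⊥ = ⊥) (hg0 : g ⊥ = ⊥)
include hf0 hg0

lemma himg_inter {H K : Set (A × B)} (hH : H ∈ LatTens A B) (hK : K ∈ LatTens A B) :
    himg f g (H ∩ K) = himg f g H ∩ himg f g K := by
  obtain ⟨n₁, a1, b1, A1, B1, hrep1, hc1⟩ := latTens_rep hH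
  obtain ⟨n₂, a2, b2, A2, B2, hrep2, hc2⟩ := latTens_rep hK
  set l₁ := List.finRange (n₁ + 1)
  set l₂ := List.finRange (n₂ + 1)
  set l : List (Fin (n₁ + 1) ⊕ Fin (n₂ + 1)) := l₁.map Sum.inl ++ l₂.map Sum.inr with hl
  have hIK : H ∩ K = ⋂ i ∈ l, pureBox (Sum.elim a1 a2 i) (Sum.elim b1 b2 i) := by
    rw [hrep1, hrep2]
    ext p
    simp only [Set.mem_inter_iff, Set.mem_iInter, hl, List.mem_append, List.mem_map]
    constructor
    · rintro ⟨h1, h2⟩ i hi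
      rcases hi with ⟨j, hj, rfl⟩ | ⟨j, hj, rfl⟩
      · exact h1 j hj
      · exact h2 j hj
    · intro h
      exact ⟨fun j hj => h (Sum.inl j) (Or.inl ⟨j, hj, rfl⟩),
        fun j hj => h (Sum.inr j) (Or.inr ⟨j, hj, rfl⟩)⟩
  have hconf : H ∩ K ⊆ pureTens (A1 ⊓ A2) (B1 ⊓ B2) :=
    (Set.inter_subset_inter hc1 hc2).trans (tens_inter A1 A2 B1 B2)
  have hMain := himg_boxes f g hf0 hg0 l (Sum.elim a1 a2) (Sum.elim b1 b2)
    (A1 ⊓ A2) (B1 ⊓ B2) (H ∩ K) hIK hconf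
  have hMH := himg_boxes f g hf0 hg0 l₁ a1 b1 A1 B1 H hrep1 hc1
  have hMK := himg_boxes f g hf0 hg0 l₂ a2 b2 A2 B2 K hrep2 hc2
  apply Set.Subset.antisymm
  · exact Set.subset_inter (himg_mono f g Set.inter_subset_left)
      (himg_mono f g Set.inter_subset_right)
  · intro q hq
    rw [hMH] at hq
    rw [hMK] at hq
    obtain ⟨⟨⟨hq1, hq2⟩, hq3⟩, ⟨⟨hq4, hq5⟩, hq6⟩⟩ := hq
    rw [hMain]
    refine ⟨⟨Set.mem_iInter₂.mpr ?_, ?_⟩, ?_⟩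
    · rintro i hi
      rcases List.mem_append.mp hi with hi | hi
      · obtain ⟨j, hj, rfl⟩ := List.mem_map.mp hi
        exact Set.mem_iInter₂.mp hq1 j hj
      · obtain ⟨j, hj, rfl⟩ := List.mem_map.mp hi
        exact Set.mem_iInter₂.mp hq4 j hj
    · rw [map_inf]
      rcases hq2 with h | h
      · rcases hq5 with h' | h'
        · exact Or.inl (le_inf h h')
        · exact Or.inr h'
      · exact Or.inr h
    · rw [map_inf]
      rcases hq3 with h | h
      · exact Or.inl h
      · rcases hq6 with h' | h'
        · exact Or.inl h'
        · exact Or.inr (le_inf h h')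

end interpart
end S16


/-- The functorial action of `⊠` on `{∨,0}`-preserving lattice homomorphisms:
`h(X) = ⋃ {f(x) ⊠ g(y) : ⟨x,y⟩ ∈ X}` maps `A ⊠ B` to `A' ⊠ B'`, sends `a ⊠ b` to
`f(a) ⊠ g(b)`, is a `{∨,0}`-homomorphism, and is an embedding when `f, g` are. -/
theorem stmt_16 {A A' B B' : Type*}
    [Lattice A] [OrderBot A] [Lattice A'] [OrderBot A']
    [Lattice B] [OrderBot B] [Lattice B'] [OrderBot B']
    (f : LatticeHom A A') (g : LatticeHom B B')
    (hf0 : f ⊥ = ⊥) (hg0 : g ⊥ = ⊥) :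
    (∀ X ∈ LatTens A B,
      (⋃ p ∈ X, pureTens (f p.1) (g p.2)) ∈ LatTens A' B') ∧
    (∀ (a : A) (b : B),
      (⋃ p ∈ pureTens a b, pureTens (f p.1) (g p.2)) = pureTens (f a) (g b)) ∧
    ((⋃ p ∈ pureTens (⊥ : A) (⊥ : B), pureTens (f p.1) (g p.2)) =
      pureTens (⊥ : A') (⊥ : B')) ∧
    (∀ H ∈ LatTens A B, ∀ K ∈ LatTens A B,
      (⋃ p ∈ BoxCl (H ∪ K), pureTens (f p.1) (g p.2)) =
        BoxCl ((⋃ p ∈ H, pureTens (f p.1) (g p.2)) ∪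
          ⋃ p ∈ K, pureTens (f p.1) (g p.2))) ∧
    (Function.Injective f → Function.Injective g →
      Set.InjOn (fun X : Set (A × B) => ⋃ p ∈ X, pureTens (f p.1) (g p.2))
        (LatTens A B) ∧
      ∀ H ∈ LatTens A B, ∀ K ∈ LatTens A B,
        (⋃ p ∈ H ∩ K, pureTens (f p.1) (g p.2)) =
          (⋃ p ∈ H, pureTens (f p.1) (g p.2)) ∩
            ⋃ p ∈ K, pureTens (f p.1) (g p.2)) := by
  classical
  refine ⟨?_, ?_, ?_, ?_, ?_⟩
  · intro X hX
    exact S16.himg_mem f g hf0 hg0 hX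
  · intro a b
    exact S16.himg_tens f g hf0 hg0 a b
  · have := S16.himg_tens f g hf0 hg0 (⊥ : A) (⊥ : B)
    rwa [hf0, hg0] at this
  · intro H hH K hK
    exact S16.himg_boxCl_union f g hf0 hg0 hH hK
  · intro hfI hgI
    constructor
    · intro X hX Y hY hXY
      ext p
      rw [S16.mem_himg_iff f g hf0 hg0 hfI hgI hX p,
        S16.mem_himg_iff f g hf0 hg0 hfI hgI hY p]
      rw [show S16.himg f g X = S16.himg f g Y from hXY]
    · intro H hH K hK
      exact S16.himg_inter f g hf0 hg0 hH hK
end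

section
/- Let A, B, C be lattices, with A bounded, and let f : B → C be a {1}-sensitive lattice homomorphism. Then the image of A ⊠ B under id_A □ f is contained in A ⊠ C; that is, for every H ∈ A ⊠ B, written H = ⋂_{i<n}(a_i □ b_i), the set ⋂_{i<n}(a_i □ f(b_i)) belongs to A ⊠ C. -/
/-- A map between ordered sets is `{1}`-sensitive if a top element exists in the
domain iff one exists in the codomain, and tops are mapped to tops. -/
def OneSensitive {α β : Type*} [LE α] [LE β] (f : α → β) : Prop :=
  ((∃ x : α, IsTop x) ↔ (∃ y : β, IsTop y)) ∧ ∀ x : α, IsTop x → IsTop (f x)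

/-- For `A` bounded and `f : B → C` a `{1}`-sensitive lattice homomorphism, the map
`id_A □ f` carries `A ⊠ B` into `A ⊠ C`. -/
theorem stmt_18 {A B C : Type*} [Lattice A] [BoundedOrder A] [Lattice B] [Lattice C]
    (f : LatticeHom B C) (hf : OneSensitive f)
    (n : ℕ) (a : Fin (n + 1) → A) (b : Fin (n + 1) → B)
    (hH : (⋂ i, pureBox (a i) (b i)) ∈ LatTens A B) :
    (⋂ i, pureBox (a i) (f (b i))) ∈ LatTens A C := by
  obtain ⟨-, u, v, hcf⟩ := hH
  constructor
  · exact ⟨n, a, fun i => f (b i), rfl⟩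
  · classical
    refine ⟨⊤, f v ⊔ Finset.univ.sup' Finset.univ_nonempty (fun i => f (b i)), ?_⟩
    rintro ⟨x, z⟩ hp
    simp only [Set.mem_iInter, pureBox, Set.mem_setOf_eq] at hp
    by_cases hx : IsBot x
    · exact Or.inr (Or.inl hx)
    by_cases hz : IsBot z
    · exact Or.inr (Or.inr hz)
    refine Or.inl ⟨le_top, ?_⟩
    by_cases hex : ∃ i, z ≤ f (b i)
    · obtain ⟨i, hi⟩ := hex
      exact le_sup_of_le_right (hi.trans (Finset.le_sup' (fun i => f (b i)) (Finset.mem_univ i)))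
    push_neg at hex
    have hxa : ∀ i, x ≤ a i := fun i => (hp i).resolve_right (hex i)
    have hmem : ∀ y : B, (x, y) ∈ ⋂ i, pureBox (a i) (b i) := by
      intro y
      simp only [Set.mem_iInter, pureBox, Set.mem_setOf_eq]
      exact fun i => Or.inl (hxa i)
    by_cases hy : ∃ y : B, ¬ IsBot y
    · obtain ⟨y₀, hy₀⟩ := hy
      have hvtop : IsTop v := by
        intro y
        rcases hcf (hmem (y ⊔ y₀)) with h | h
        · exact le_sup_left.trans h.2
        · rcases h with h | h
          · exact absurd h hx
          · exact absurd (fun c => le_sup_right.trans (h c)) hy₀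
      exact le_sup_of_le_left ((hf.2 v hvtop) z)
    · push_neg at hy
      have htop : IsTop (b 0) := fun y => hy y (b 0)
      exact absurd ((hf.2 _ htop) z) (hex 0)
end

section
/- Let A and B be lattices with least elements. Then A ⊠ B is a capped sub-tensor product of A and B. Furthermore, A ⊠ B is the smallest sub-tensor product of A and B with respect to containment: every sub-tensor product of A and B contains A ⊠ B. -/
/-- A bi-ideal of `A × B` (for lattices with zero). -/
def IsBiIdeal {A B : Type*} [Lattice A] [OrderBot A] [Lattice B] [OrderBot B]
    (H : Set (A × B)) : Prop :=
  (∀ a : A, (a, (⊥ : B)) ∈ H) ∧ (∀ b : B, ((⊥ : A), b) ∈ H) ∧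
  (∀ p q : A × B, q.1 ≤ p.1 → q.2 ≤ p.2 → p ∈ H → q ∈ H) ∧
  (∀ (a₀ a₁ : A) (b : B), (a₀, b) ∈ H → (a₁, b) ∈ H → (a₀ ⊔ a₁, b) ∈ H) ∧
  (∀ (a : A) (b₀ b₁ : B), (a, b₀) ∈ H → (a, b₁) ∈ H → (a, b₀ ⊔ b₁) ∈ H)

/-- The semilattice tensor product `A ⊗ B`: the bi-ideals of `A × B` that are the
smallest bi-ideal containing some finite union of pure tensors. -/
def TensProd (A B : Type*) [Lattice A] [OrderBot A] [Lattice B] [OrderBot B] :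
    Set (Set (A × B)) :=
  {H | IsBiIdeal H ∧ ∃ (n : ℕ) (a : Fin (n + 1) → A) (b : Fin (n + 1) → B),
    (⋃ i, pureCirc (a i) (b i)) ⊆ H ∧
    ∀ K : Set (A × B), IsBiIdeal K → (⋃ i, pureCirc (a i) (b i)) ⊆ K → H ⊆ K}

/-- A sub-tensor product of `A` and `B`: a subset of `A ⊗ B` closed under finite
intersections, forming a lattice under containment, and containing all mixed
tensors. -/
def IsSubTensorProduct {A B : Type*} [Lattice A] [OrderBot A] [Lattice B] [OrderBot B]
    (C : Set (Set (A × B))) : Prop :=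
  C ⊆ TensProd A B ∧
  (∀ H ∈ C, ∀ K ∈ C, H ∩ K ∈ C) ∧
  (∀ H ∈ C, ∀ K ∈ C,
    (∃ J ∈ C, H ⊆ J ∧ K ⊆ J ∧ ∀ L ∈ C, H ⊆ L → K ⊆ L → J ⊆ L) ∧
    (∃ J ∈ C, J ⊆ H ∧ J ⊆ K ∧ ∀ L ∈ C, L ⊆ H → L ⊆ K → L ⊆ J)) ∧
  ∀ (a₀ a₁ : A) (b₀ b₁ : B),
    (a₀ ≤ a₁ ∧ b₁ ≤ b₀) ∨ (a₁ ≤ a₀ ∧ b₀ ≤ b₁) →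
    pureTens a₀ b₀ ∪ pureTens a₁ b₁ ∈ C

section Stmt19Aux
set_option linter.unusedSectionVars false
set_option linter.unusedVariables false
variable {A B : Type*} [Lattice A] [OrderBot A] [Lattice B] [OrderBot B]

lemma isBot_iff_le_bot {x : A} : IsBot x ↔ x ≤ ⊥ :=
  ⟨fun h => h ⊥, fun h y => h.trans bot_le⟩

lemma bot_mem_box {p : A × B} (h : IsBot p.1 ∨ IsBot p.2) (a : A) (b : B) :
    p ∈ pureBox a b :=
  h.imp (fun h => h a) (fun h => h b)

lemma box_mono {a a' : A} {b b' : B} (ha : a ≤ a') (hb : b ≤ b') :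
    pureBox a b ⊆ pureBox a' b' :=
  fun _ hp => hp.imp (fun h => h.trans ha) (fun h => h.trans hb)

lemma tens_mono {a a' : A} {b b' : B} (ha : a ≤ a') (hb : b ≤ b') :
    pureTens a b ⊆ pureTens a' b' :=
  fun _ hp => hp.imp (fun h => ⟨h.1.trans ha, h.2.trans hb⟩) id

lemma mem_pureTens_of_bot {p : A × B} (h : IsBot p.1 ∨ IsBot p.2) (a : A) (b : B) :
    p ∈ pureTens a b := Or.inr h

lemma circ_subset_tens (a : A) (b : B) : pureCirc a b ⊆ pureTens a b :=
  Set.subset_union_left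

lemma self_mem_circ (a : A) (b : B) : (a, b) ∈ pureCirc a b := ⟨le_refl a, le_refl b⟩

lemma tens_subset_box_iff {c a : A} {d b : B} :
    pureTens c d ⊆ pureBox a b ↔ c ≤ a ∨ d ≤ b := by
  constructor
  · intro h
    exact h (circ_subset_tens c d (self_mem_circ c d))
  · rintro (h | h) p hp
    · rcases hp with ⟨h1, _⟩ | hb
      · exact Or.inl (h1.trans h)
      · exact bot_mem_box hb a b
    · rcases hp with ⟨_, h2⟩ | hb
      · exact Or.inr (h2.trans h)
      · exact bot_mem_box hb a b

lemma box_inter_box (a : A) (b : B) :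
    pureBox a (⊥ : B) ∩ pureBox (⊥ : A) b = pureTens a b := by
  ext ⟨x, y⟩
  simp only [pureBox, pureTens, pureCirc, Set.mem_inter_iff, Set.mem_setOf_eq,
    Set.mem_union, isBot_iff_le_bot]
  constructor
  · rintro ⟨hx | hy, hx' | hy'⟩
    · exact Or.inr (Or.inl hx')
    · exact Or.inl ⟨hx, hy'⟩
    · exact Or.inr (Or.inl hx')
    · exact Or.inr (Or.inr hy)
  · rintro (⟨hx, hy⟩ | hx | hy)
    · exact ⟨Or.inl hx, Or.inr hy⟩
    · exact ⟨Or.inl (hx.trans bot_le), Or.inl hx⟩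
    · exact ⟨Or.inr hy, Or.inr (hy.trans bot_le)⟩

lemma iUnion_reindex {α ι κ : Type*} (e : κ ≃ ι) (f : ι → Set α) :
    ⋃ i, f i = ⋃ j, f (e j) := by
  ext p
  simp only [Set.mem_iUnion]
  exact ⟨fun ⟨i, hi⟩ => ⟨e.symm i, by simpa using hi⟩, fun ⟨j, hj⟩ => ⟨e j, hj⟩⟩

lemma iInter_reindex {α ι κ : Type*} (e : κ ≃ ι) (f : ι → Set α) :
    ⋂ i, f i = ⋂ j, f (e j) := by
  ext p
  simp only [Set.mem_iInter]
  exact ⟨fun h j => h (e j), fun h i => by simpa using h (e.symm i)⟩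

lemma mem_boxProd_of_fintype {ι : Type} [Fintype ι] [Nonempty ι]
    (a : ι → A) (b : ι → B) : (⋂ i, pureBox (a i) (b i)) ∈ BoxProd A B := by
  obtain ⟨n, hn⟩ : ∃ n, Fintype.card ι = n + 1 :=
    ⟨Fintype.card ι - 1, (Nat.succ_pred_eq_of_pos Fintype.card_pos).symm⟩
  have e : Fin (n + 1) ≃ ι := (Fintype.equivFinOfCardEq hn).symm
  exact ⟨n, fun j => a (e j), fun j => b (e j),
    iInter_reindex e (fun i => pureBox (a i) (b i))⟩

end Stmt19Aux
section Capped
set_option linter.unusedSectionVars false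
set_option linter.unusedVariables false
variable {A B : Type*} [Lattice A] [OrderBot A] [Lattice B] [OrderBot B]

lemma mem_latTens_capped' {H : Set (A × B)} (hH : H ∈ LatTens A B) :
    ∃ (n : ℕ) (c : Fin (n + 1) → A) (d : Fin (n + 1) → B),
      H = ⋃ i, pureTens (c i) (d i) := by
  classical
  obtain ⟨⟨m, a, b, rfl⟩, aa, bb, hconf⟩ := hH
  have hne : (Finset.univ : Finset (Fin (m + 1))).Nonempty := Finset.univ_nonempty
  set α := (Finset.univ : Finset (Fin (m + 1))).inf' hne a with hαdef
  set β := (Finset.univ : Finset (Fin (m + 1))).inf' hne b with hβdef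
  have htopB : α ≠ ⊥ → ∀ y : B, y ≤ bb := by
    intro hαne y
    have h1 : ((α, y) : A × B) ∈ ⋂ i, pureBox (a i) (b i) :=
      Set.mem_iInter.2 fun i => Or.inl (Finset.inf'_le a (Finset.mem_univ i))
    rcases hconf h1 with ⟨_, h2⟩ | (hb | hb)
    · exact h2
    · exact absurd (le_bot_iff.1 (hb ⊥)) hαne
    · exact hb bb
  have htopA : β ≠ ⊥ → ∀ x : A, x ≤ aa := by
    intro hβne x
    have h1 : ((x, β) : A × B) ∈ ⋂ i, pureBox (a i) (b i) :=
      Set.mem_iInter.2 fun i => Or.inr (Finset.inf'_le b (Finset.mem_univ i))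
    rcases hconf h1 with ⟨h2, _⟩ | (hb | hb)
    · exact h2
    · exact hb aa
    · exact absurd (le_bot_iff.1 (hb ⊥)) hβne
  set c : Finset (Fin (m + 1)) → A := fun S =>
    if hS : S.Nonempty then
      (if S = Finset.univ then (if α = ⊥ then ⊥ else α) else S.inf' hS a)
    else (if β = ⊥ then ⊥ else aa) with hcdef
  set d : Finset (Fin (m + 1)) → B := fun S =>
    if hS : S.Nonempty then
      (if hU : S = Finset.univ then (if α = ⊥ then ⊥ else bb)
       else Sᶜ.inf' (Finset.nonempty_iff_ne_empty.2 (fun h => hU ((Finset.compl_eq_empty_iff S).1 h))) b)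
    else (if β = ⊥ then ⊥ else β) with hddef
  have hEq : (⋂ i, pureBox (a i) (b i)) = ⋃ S : Finset (Fin (m + 1)), pureTens (c S) (d S) := by
    apply Set.Subset.antisymm
    · rintro ⟨x, y⟩ hp
      have hp' : ∀ i, x ≤ a i ∨ y ≤ b i := fun i => Set.mem_iInter.1 hp i
      set S := Finset.univ.filter (fun i => x ≤ a i) with hSdef
      refine Set.mem_iUnion.2 ⟨S, ?_⟩
      by_cases hS : S.Nonempty
      · by_cases hU : S = Finset.univ
        · have hxα : x ≤ α := Finset.le_inf' hne a (fun i _ => by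
            have hiS : i ∈ S := hU ▸ Finset.mem_univ i
            exact (Finset.mem_filter.1 hiS).2)
          by_cases h0 : α = ⊥
          · exact Or.inr (Or.inl (isBot_iff_le_bot.2 (h0 ▸ hxα)))
          · refine Or.inl ⟨?_, ?_⟩
            · show x ≤ c S
              rw [hcdef]; simp only [dif_pos hS, if_pos hU, if_neg h0]
              exact hxα
            · show y ≤ d S
              rw [hddef]; simp only [dif_pos hS, dif_pos hU, if_neg h0]
              exact htopB h0 y
        · refine Or.inl ⟨?_, ?_⟩
          · show x ≤ c S
            rw [hcdef]; simp only [dif_pos hS, if_neg hU]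
            exact Finset.le_inf' hS a fun i hi => (Finset.mem_filter.1 hi).2
          · show y ≤ d S
            rw [hddef]; simp only [dif_pos hS, dif_neg hU]
            refine Finset.le_inf' _ b fun i hi => ?_
            have hiS : i ∉ S := Finset.mem_compl.1 hi
            rcases hp' i with hx | hy
            · exact absurd (Finset.mem_filter.2 ⟨Finset.mem_univ i, hx⟩) hiS
            · exact hy
      · -- S empty: ∀ i, ¬ x ≤ a i, hence y ≤ b i for all i
        have hyβ : y ≤ β := Finset.le_inf' hne b fun i _ => by
          rcases hp' i with hx | hy
          · exact absurd (Finset.mem_filter.2 ⟨Finset.mem_univ i, hx⟩)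
              (fun h => hS ⟨i, h⟩)
          · exact hy
        by_cases h0 : β = ⊥
        · exact Or.inr (Or.inr (isBot_iff_le_bot.2 (h0 ▸ hyβ)))
        · refine Or.inl ⟨?_, ?_⟩
          · show x ≤ c S
            rw [hcdef]; simp only [dif_neg hS, if_neg h0]
            exact htopA h0 x
          · show y ≤ d S
            rw [hddef]; simp only [dif_neg hS, if_neg h0]
            exact hyβ
    · intro p hp
      obtain ⟨S, hpS⟩ := Set.mem_iUnion.1 hp
      rcases hpS with ⟨h1, h2⟩ | hb
      · refine Set.mem_iInter.2 fun i => ?_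
        by_cases hS : S.Nonempty
        · by_cases hU : S = Finset.univ
          · by_cases h0 : α = ⊥
            · refine Or.inl ?_
              have : p.1 ≤ (⊥ : A) := by
                have := h1; rw [hcdef] at this
                simpa only [dif_pos hS, if_pos hU, if_pos h0] using this
              exact this.trans bot_le
            · refine Or.inl ?_
              have hpα : p.1 ≤ α := by
                have := h1; rw [hcdef] at this
                simpa only [dif_pos hS, if_pos hU, if_neg h0] using this
              exact hpα.trans (Finset.inf'_le a (Finset.mem_univ i))
          · by_cases hi : i ∈ S
            · refine Or.inl ?_
              have hpS' : p.1 ≤ S.inf' hS a := by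
                have := h1; rw [hcdef] at this
                simpa only [dif_pos hS, if_neg hU] using this
              exact hpS'.trans (Finset.inf'_le a hi)
            · refine Or.inr ?_
              have hpS' : p.2 ≤ Sᶜ.inf' (Finset.nonempty_iff_ne_empty.2 (fun h => hU ((Finset.compl_eq_empty_iff S).1 h))) b := by
                have := h2; rw [hddef] at this
                simpa only [dif_pos hS, dif_neg hU] using this
              exact hpS'.trans (Finset.inf'_le b (Finset.mem_compl.2 hi))
        · by_cases h0 : β = ⊥
          · refine Or.inr ?_
            have : p.2 ≤ (⊥ : B) := by
              have := h2; rw [hddef] at this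
              simpa only [dif_neg hS, if_pos h0] using this
            exact this.trans bot_le
          · refine Or.inr ?_
            have hpβ : p.2 ≤ β := by
              have := h2; rw [hddef] at this
              simpa only [dif_neg hS, if_neg h0] using this
            exact hpβ.trans (Finset.inf'_le b (Finset.mem_univ i))
      · exact Set.mem_iInter.2 fun i => bot_mem_box hb _ _
  obtain ⟨n, hn⟩ : ∃ n, Fintype.card (Finset (Fin (m + 1))) = n + 1 :=
    ⟨Fintype.card (Finset (Fin (m + 1))) - 1,
      (Nat.succ_pred_eq_of_pos Fintype.card_pos).symm⟩
  have e : Fin (n + 1) ≃ Finset (Fin (m + 1)) := (Fintype.equivFinOfCardEq hn).symm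
  exact ⟨n, fun j => c (e j), fun j => d (e j),
    hEq.trans (iUnion_reindex e fun S => pureTens (c S) (d S))⟩

end Capped
section Stmt19Aux2
set_option linter.unusedSectionVars false
set_option linter.unusedVariables false
variable {A B : Type*} [Lattice A] [OrderBot A] [Lattice B] [OrderBot B]

lemma isBiIdeal_pureBox (a : A) (b : B) : IsBiIdeal (pureBox a b) := by
  refine ⟨fun x => Or.inr bot_le, fun y => Or.inl bot_le, ?_, ?_, ?_⟩
  · rintro p q h1 h2 (h | h)
    · exact Or.inl (h1.trans h)
    · exact Or.inr (h2.trans h)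
  · rintro a₀ a₁ y (h | h) (h' | h')
    · exact Or.inl (sup_le h h')
    · exact Or.inr h'
    · exact Or.inr h
    · exact Or.inr h
  · rintro x b₀ b₁ (h | h) (h' | h')
    · exact Or.inl h
    · exact Or.inl h
    · exact Or.inl h'
    · exact Or.inr (sup_le h h')

lemma isBiIdeal_iInter {ι : Type*} [Nonempty ι] {f : ι → Set (A × B)}
    (h : ∀ i, IsBiIdeal (f i)) : IsBiIdeal (⋂ i, f i) := by
  refine ⟨fun x => Set.mem_iInter.2 fun i => (h i).1 x,
    fun y => Set.mem_iInter.2 fun i => (h i).2.1 y, ?_, ?_, ?_⟩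
  · intro p q h1 h2 hp
    exact Set.mem_iInter.2 fun i => (h i).2.2.1 p q h1 h2 (Set.mem_iInter.1 hp i)
  · intro a₀ a₁ y h0 h1
    exact Set.mem_iInter.2 fun i =>
      (h i).2.2.2.1 a₀ a₁ y (Set.mem_iInter.1 h0 i) (Set.mem_iInter.1 h1 i)
  · intro x b₀ b₁ h0 h1
    exact Set.mem_iInter.2 fun i =>
      (h i).2.2.2.2 x b₀ b₁ (Set.mem_iInter.1 h0 i) (Set.mem_iInter.1 h1 i)

lemma bot_subset_of_biIdeal {H : Set (A × B)} (hH : IsBiIdeal H) {p : A × B}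
    (hp : IsBot p.1 ∨ IsBot p.2) : p ∈ H := by
  rcases hp with h | h
  · exact hH.2.2.1 (⊥, p.2) p (h ⊥) (le_refl _) (hH.2.1 p.2)
  · exact hH.2.2.1 (p.1, ⊥) p (le_refl _) (h ⊥) (hH.1 p.1)

lemma latTens_subset_tensProd : LatTens A B ⊆ TensProd A B := by
  intro H hH
  obtain ⟨n, c, d, hcap⟩ := mem_latTens_capped' hH
  obtain ⟨⟨m, a, b, hbox⟩, _⟩ := hH
  have hbi : IsBiIdeal H := hbox ▸ isBiIdeal_iInter fun i => isBiIdeal_pureBox _ _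
  refine ⟨hbi, n, c, d, ?_, ?_⟩
  · intro p hp
    obtain ⟨i, hi⟩ := Set.mem_iUnion.1 hp
    exact hcap ▸ Set.mem_iUnion.2 ⟨i, circ_subset_tens _ _ hi⟩
  · intro K hK hsub p hp
    rw [hcap] at hp
    obtain ⟨i, hi⟩ := Set.mem_iUnion.1 hp
    rcases hi with hc | hb
    · exact hsub (Set.mem_iUnion.2 ⟨i, hc⟩)
    · exact bot_subset_of_biIdeal hK hb

lemma inter_mem_latTens {H K : Set (A × B)} (hH : H ∈ LatTens A B)
    (hK : K ∈ LatTens A B) : H ∩ K ∈ LatTens A B := by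
  obtain ⟨⟨m, a, b, rfl⟩, cH⟩ := hH
  obtain ⟨⟨n, a', b', rfl⟩, cK⟩ := hK
  constructor
  · have : (⋂ i, pureBox (a i) (b i)) ∩ (⋂ j, pureBox (a' j) (b' j)) =
        ⋂ s : Fin (m + 1) ⊕ Fin (n + 1),
          pureBox (Sum.elim a a' s) (Sum.elim b b' s) := by
      ext p
      simp only [Set.mem_inter_iff, Set.mem_iInter, Sum.forall]
      exact ⟨fun ⟨h1, h2⟩ => ⟨h1, h2⟩, fun ⟨h1, h2⟩ => ⟨h1, h2⟩⟩
    rw [this]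
    exact mem_boxProd_of_fintype _ _
  · obtain ⟨aa, bb, hc⟩ := cH
    exact ⟨aa, bb, fun p hp => hc hp.1⟩

lemma mixed_tens_eq (a₀ a₁ : A) (b₀ b₁ : B) (h01 : a₀ ≤ a₁) (h10 : b₁ ≤ b₀) :
    pureTens a₀ b₀ ∪ pureTens a₁ b₁ =
      pureBox a₀ b₁ ∩ (pureBox a₁ ⊥ ∩ pureBox ⊥ b₀) := by
  ext ⟨x, y⟩
  simp only [pureBox, pureTens, pureCirc, Set.mem_inter_iff, Set.mem_setOf_eq,
    Set.mem_union, isBot_iff_le_bot]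
  constructor
  · rintro ((⟨hx, hy⟩ | (h | h)) | (⟨hx, hy⟩ | (h | h)))
    · exact ⟨Or.inl hx, Or.inl (hx.trans h01), Or.inr hy⟩
    · exact ⟨Or.inl (h.trans bot_le), Or.inl (h.trans bot_le), Or.inl h⟩
    · exact ⟨Or.inr (h.trans bot_le), Or.inr h, Or.inr (h.trans bot_le)⟩
    · exact ⟨Or.inr hy, Or.inl hx, Or.inr (hy.trans h10)⟩
    · exact ⟨Or.inl (h.trans bot_le), Or.inl (h.trans bot_le), Or.inl h⟩
    · exact ⟨Or.inr (h.trans bot_le), Or.inr h, Or.inr (h.trans bot_le)⟩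
  · rintro ⟨h1, h2, h3⟩
    rcases h2 with h2 | h2
    · rcases h3 with h3 | h3
      · exact Or.inl (Or.inr (Or.inl h3))
      · rcases h1 with h1 | h1
        · exact Or.inl (Or.inl ⟨h1, h3⟩)
        · exact Or.inr (Or.inl ⟨h2, h1⟩)
    · exact Or.inl (Or.inr (Or.inr h2))

lemma mixed_tens_mem (a₀ a₁ : A) (b₀ b₁ : B) (h01 : a₀ ≤ a₁) (h10 : b₁ ≤ b₀) :
    pureTens a₀ b₀ ∪ pureTens a₁ b₁ ∈ LatTens A B := by
  constructor
  · refine ⟨2, ![a₀, a₁, ⊥], ![b₁, ⊥, b₀], ?_⟩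
    rw [mixed_tens_eq a₀ a₁ b₀ b₁ h01 h10]
    have h3 : (⋂ i : Fin 3, pureBox (![a₀, a₁, ⊥] i) (![b₁, ⊥, b₀] i)) =
        pureBox a₀ b₁ ∩ (pureBox a₁ ⊥ ∩ pureBox ⊥ b₀) := by
      ext p
      simp only [Set.mem_iInter, Set.mem_inter_iff, Fin.forall_fin_succ,
        IsEmpty.forall_iff, Matrix.cons_val_zero, Matrix.cons_val_one,
        Matrix.head_cons, Matrix.cons_val_succ]
      tauto
    exact h3.symm
  · refine ⟨a₁, b₀, Set.union_subset ?_ ?_⟩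
    · exact tens_mono h01 (le_refl b₀)
    · exact tens_mono (le_refl a₁) h10

end Stmt19Aux2

section Stmt19Aux3
set_option linter.unusedSectionVars false
set_option linter.unusedVariables false
variable {A B : Type*} [Lattice A] [OrderBot A] [Lattice B] [OrderBot B]

lemma join_exists {H K : Set (A × B)} (hH : H ∈ LatTens A B) (hK : K ∈ LatTens A B) :
    ∃ J ∈ LatTens A B, H ⊆ J ∧ K ⊆ J ∧
      ∀ L ∈ LatTens A B, H ⊆ L → K ⊆ L → J ⊆ L := by
  classical
  obtain ⟨h, c, d, hHe⟩ := mem_latTens_capped' hH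
  obtain ⟨k, c', d', hKe⟩ := mem_latTens_capped' hK
  set C : Fin (h + 1) ⊕ Fin (k + 1) → A := Sum.elim c c' with hC
  set D : Fin (h + 1) ⊕ Fin (k + 1) → B := Sum.elim d d' with hD
  set J := ⋂ S : Finset (Fin (h + 1) ⊕ Fin (k + 1)),
    pureBox (S.sup C) (Sᶜ.sup D) with hJ
  have htens : ∀ i, pureTens (C i) (D i) ⊆ J := by
    intro i
    refine Set.subset_iInter fun S => ?_
    rcases em (i ∈ S) with hi | hi
    · exact tens_subset_box_iff.2 (Or.inl (Finset.le_sup hi))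
    · exact tens_subset_box_iff.2 (Or.inr (Finset.le_sup (Finset.mem_compl.2 hi)))
  have hHJ : H ⊆ J := by
    rw [hHe]
    exact Set.iUnion_subset fun r => htens (Sum.inl r)
  have hKJ : K ⊆ J := by
    rw [hKe]
    exact Set.iUnion_subset fun r => htens (Sum.inr r)
  refine ⟨J, ⟨mem_boxProd_of_fintype _ _, ?_⟩, hHJ, hKJ, ?_⟩
  · refine ⟨Finset.univ.sup C, Finset.univ.sup D, ?_⟩
    intro p hp
    rw [← box_inter_box]
    constructor
    · have := Set.mem_iInter.1 hp Finset.univ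
      simpa [Finset.compl_univ, Finset.sup_empty] using this
    · have := Set.mem_iInter.1 hp (∅ : Finset _)
      simpa [Finset.compl_empty, Finset.sup_empty] using this
  · intro L hL hHL hKL
    obtain ⟨⟨l, e, f, rfl⟩, _⟩ := hL
    refine Set.subset_iInter fun j => ?_
    -- each pure tensor is contained in the box e j □ f j
    have hin : ∀ i, C i ≤ e j ∨ D i ≤ f j := by
      intro i
      refine tens_subset_box_iff.1 ?_
      have hsub : pureTens (C i) (D i) ⊆ ⋂ j, pureBox (e j) (f j) := by
        rcases i with r | r
        · have hCr : C (Sum.inl r) = c r := by rw [hC]; rfl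
          have hDr : D (Sum.inl r) = d r := by rw [hD]; rfl
          rw [hCr, hDr, hHe] at *
          exact le_trans (Set.subset_iUnion (fun i => pureTens (c i) (d i)) r) hHL
        · have hCr : C (Sum.inr r) = c' r := by rw [hC]; rfl
          have hDr : D (Sum.inr r) = d' r := by rw [hD]; rfl
          rw [hCr, hDr, hKe] at *
          exact le_trans (Set.subset_iUnion (fun i => pureTens (c' i) (d' i)) r) hKL
      exact hsub.trans (Set.iInter_subset _ j)
    set S := Finset.univ.filter (fun i => C i ≤ e j) with hS
    have h1 : S.sup C ≤ e j :=
      Finset.sup_le fun i hi => (Finset.mem_filter.1 hi).2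
    have h2 : Sᶜ.sup D ≤ f j := by
      refine Finset.sup_le fun i hi => ?_
      have hiS : i ∉ S := Finset.mem_compl.1 hi
      rcases hin i with hx | hy
      · exact absurd (Finset.mem_filter.2 ⟨Finset.mem_univ i, hx⟩) hiS
      · exact hy
    exact (Set.iInter_subset _ S).trans (box_mono h1 h2)

lemma iInter_mem_of_interClosed {C : Set (Set (A × B))}
    (hC : ∀ H ∈ C, ∀ K ∈ C, H ∩ K ∈ C) :
    ∀ (n : ℕ) (f : Fin (n + 1) → Set (A × B)), (∀ i, f i ∈ C) → (⋂ i, f i) ∈ C := by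
  intro n
  induction n with
  | zero =>
    intro f hf
    have : ⋂ i, f i = f 0 := by
      ext p
      simp only [Set.mem_iInter]
      exact ⟨fun h => h 0, fun h i => Fin.fin_one_eq_zero i ▸ h⟩
    exact this ▸ hf 0
  | succ n ih =>
    intro f hf
    have : ⋂ i, f i = f 0 ∩ ⋂ i : Fin (n + 1), f i.succ := by
      ext p
      simp only [Set.mem_iInter, Set.mem_inter_iff]
      exact ⟨fun hp => ⟨hp 0, fun i => hp i.succ⟩,
        fun ⟨h0, hs⟩ i => Fin.cases h0 hs i⟩
    rw [this]
    exact hC _ (hf 0) _ (ih _ fun i => hf i.succ)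

lemma tens_inter_box (aa a : A) (bb b : B) :
    pureTens aa bb ∩ pureBox a b = pureTens (aa ⊓ a) bb ∪ pureTens aa (bb ⊓ b) := by
  ext ⟨x, y⟩
  simp only [pureTens, pureCirc, pureBox, Set.mem_inter_iff, Set.mem_union,
    Set.mem_setOf_eq, isBot_iff_le_bot, le_inf_iff]
  constructor
  · rintro ⟨(⟨hx, hy⟩ | (hb | hb)), (ha | hb')⟩
    · exact Or.inl (Or.inl ⟨⟨hx, ha⟩, hy⟩)
    · exact Or.inr (Or.inl ⟨hx, hy, hb'⟩)
    · exact Or.inl (Or.inr (Or.inl hb))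
    · exact Or.inl (Or.inr (Or.inl hb))
    · exact Or.inl (Or.inr (Or.inr hb))
    · exact Or.inl (Or.inr (Or.inr hb))
  · rintro ((⟨⟨hx, ha⟩, hy⟩ | (hb | hb)) | (⟨hx, hy, hb'⟩ | (hb | hb)))
    · exact ⟨Or.inl ⟨hx, hy⟩, Or.inl ha⟩
    · exact ⟨Or.inr (Or.inl hb), Or.inl (hb.trans bot_le)⟩
    · exact ⟨Or.inr (Or.inr hb), Or.inr (hb.trans bot_le)⟩
    · exact ⟨Or.inl ⟨hx, hy⟩, Or.inr hb'⟩
    · exact ⟨Or.inr (Or.inl hb), Or.inl (hb.trans bot_le)⟩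
    · exact ⟨Or.inr (Or.inr hb), Or.inr (hb.trans bot_le)⟩

lemma latTens_min {C : Set (Set (A × B))} (hC : IsSubTensorProduct C) :
    LatTens A B ⊆ C := by
  intro H hH
  obtain ⟨⟨m, a, b, rfl⟩, aa, bb, hconf⟩ := hH
  have key : (⋂ i, pureBox (a i) (b i)) =
      ⋂ i, (pureTens (aa ⊓ a i) bb ∪ pureTens aa (bb ⊓ b i)) := by
    calc (⋂ i, pureBox (a i) (b i))
        = pureTens aa bb ∩ ⋂ i, pureBox (a i) (b i) :=
          (Set.inter_eq_self_of_subset_right hconf).symm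
      _ = ⋂ i, (pureTens aa bb ∩ pureBox (a i) (b i)) := by
          rw [Set.inter_iInter]
      _ = ⋂ i, (pureTens (aa ⊓ a i) bb ∪ pureTens aa (bb ⊓ b i)) :=
          Set.iInter_congr fun i => tens_inter_box aa (a i) bb (b i)
  rw [key]
  refine iInter_mem_of_interClosed hC.2.1 m _ fun i => ?_
  exact hC.2.2.2 (aa ⊓ a i) aa bb (bb ⊓ b i) (Or.inl ⟨inf_le_left, inf_le_left⟩)

end Stmt19Aux3


/-- `A ⊠ B` is a capped sub-tensor product of `A` and `B` (every element being a
finite union of pure tensors), and it is the smallest sub-tensor product. -/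
theorem stmt_19 {A B : Type*} [Lattice A] [OrderBot A] [Lattice B] [OrderBot B] :
    IsSubTensorProduct (LatTens A B) ∧
    (∀ H ∈ LatTens A B, ∃ (n : ℕ) (a : Fin n → A) (b : Fin n → B),
      H = ⋃ i, pureTens (a i) (b i)) ∧
    ∀ C : Set (Set (A × B)), IsSubTensorProduct C → LatTens A B ⊆ C := by
  refine ⟨⟨latTens_subset_tensProd, fun H hH K hK => inter_mem_latTens hH hK,
    fun H hH K hK => ⟨join_exists hH hK, ?_⟩, ?_⟩, ?_, fun C hC => latTens_min hC⟩
  · exact ⟨H ∩ K, inter_mem_latTens hH hK, Set.inter_subset_left,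
      Set.inter_subset_right, fun L _ h1 h2 => Set.subset_inter h1 h2⟩
  · rintro a₀ a₁ b₀ b₁ (⟨h1, h2⟩ | ⟨h1, h2⟩)
    · exact mixed_tens_mem a₀ a₁ b₀ b₁ h1 h2
    · rw [Set.union_comm]
      exact mixed_tens_mem a₁ a₀ b₁ b₀ h1 h2
  · intro H hH
    obtain ⟨n, c, d, hc⟩ := mem_latTens_capped' hH
    exact ⟨n + 1, c, d, hc⟩
end
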